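/- The largest zero x_n of the generalized Laguerre polynomial L_n^{(α)} with α > -1 satisfies x_n < 2n + α + 1 + √((2n+α+1)² + 1/4 - α²). -/
import Mathlib


open Finset

/-- The generalized Laguerre polynomial `L_n^{(α)}(x) = ∑_{k=0}^n binom(n+α, n-k) (-x)^k / k!`. -/
noncomputable def lagL (n : ℕ) (α : ℝ) (x : ℝ) : ℝ :=
  ∑ k ∈ Finset.range (n + 1),
    ((∏ i ∈ Finset.range (n - k), (α + (k : ℝ) + 1 + (i : ℝ))) / (Nat.factorial (n - k) : ℝ))
      * (-x) ^ k / (Nat.factorial k : ℝ)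

noncomputable def pp (β : ℝ) (s : ℕ) : ℝ := ∏ i ∈ Finset.range s, (β + (i : ℝ))

lemma pp_succ (β : ℝ) (s : ℕ) : pp β (s+1) = pp β s * (β + s) := Finset.prod_range_succ _ _

lemma pp_succ' (β : ℝ) (s : ℕ) : pp β (s+1) = β * pp (β+1) s := by
  unfold pp
  rw [Finset.prod_range_succ']
  have h1 : (∏ i ∈ Finset.range s, (β + ((i+1 : ℕ):ℝ))) = ∏ i ∈ Finset.range s, ((β+1) + (i:ℝ)) :=
    Finset.prod_congr rfl fun i _ => by push_cast; ring
  rw [h1]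
  push_cast
  ring

noncomputable def dcoef (α : ℝ) (n k : ℕ) : ℝ :=
  (∏ i ∈ Finset.range (n - k), (α + (k : ℝ) + 1 + (i : ℝ))) / (Nat.factorial (n - k) : ℝ)

lemma dcoef_pp (α : ℝ) (n k : ℕ) :
    dcoef α n k = pp (α + (k:ℝ) + 1) (n - k) / (Nat.factorial (n - k) : ℝ) := rfl

lemma lagL_eq (n : ℕ) (α x : ℝ) :
    lagL n α x = ∑ k ∈ Finset.range (n+1), dcoef α n k * (-x)^k / (Nat.factorial k : ℝ) := rfl

lemma main_id (α : ℝ) (k m : ℕ) :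
    ((k:ℝ)+(m:ℝ)+2) * dcoef α (k+m+2) k
      = (2*((k:ℝ)+(m:ℝ))+3+α) * dcoef α (k+m+1) k
        + (k:ℝ) * dcoef α (k+m+1) (k-1)
        - ((k:ℝ)+(m:ℝ)+1+α) * dcoef α (k+m) k := by
  have hm : (Nat.factorial m : ℝ) ≠ 0 := Nat.cast_ne_zero.mpr (Nat.factorial_ne_zero m)
  rcases k with _ | j
  · simp only [Nat.cast_zero, zero_add, zero_mul, add_zero]
    rw [dcoef_pp, dcoef_pp, dcoef_pp]
    simp only [Nat.sub_zero]
    rw [show ((m:ℕ)+2) = (m+1)+1 from rfl, pp_succ, pp_succ]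
    simp only [Nat.factorial_succ]
    push_cast
    field_simp
    ring
  · have hj : (j+1) - 1 = j := rfl
    rw [hj]
    rw [dcoef_pp, dcoef_pp, dcoef_pp, dcoef_pp]
    rw [show j+1+m+2-(j+1) = m+2 from by omega, show j+1+m+1-(j+1) = m+1 from by omega,
        show j+1+m-(j+1) = m from by omega, show j+1+m+1-j = m+2 from by omega]
    rw [show ((m:ℕ)+2) = (m+1)+1 from rfl, pp_succ, pp_succ,
        pp_succ' (α + (j:ℝ) + 1) (m+1), show (α + (j:ℝ) + 1 + 1) = α + ((j:ℕ)+1 : ℕ) + 1 from by push_cast; ring,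
        pp_succ]
    simp only [Nat.factorial_succ]
    push_cast
    field_simp
    ring

noncomputable def gaux (α x : ℝ) (n k : ℕ) : ℝ :=
  (k:ℝ) * dcoef α (n+1) (k-1) * (-x)^k / (Nat.factorial k : ℝ)

lemma lagL_rec (α x : ℝ) (n : ℕ) :
    ((n:ℝ)+2) * lagL (n+2) α x
      = (2*(n:ℝ)+3+α - x) * lagL (n+1) α x - ((n:ℝ)+1+α) * lagL n α x := by
  have h0 : lagL n α x = ∑ k ∈ Finset.range (n+1), dcoef α n k * (-x)^k / (Nat.factorial k : ℝ) :=
    lagL_eq n α x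
  have h1 : lagL (n+1) α x
      = (∑ k ∈ Finset.range (n+1), dcoef α (n+1) k * (-x)^k / (Nat.factorial k : ℝ))
        + (-x)^(n+1) / (Nat.factorial (n+1) : ℝ) := by
    rw [lagL_eq, Finset.sum_range_succ]
    have : dcoef α (n+1) (n+1) = 1 := by
      simp [dcoef_pp, pp]
    rw [this]; ring
  have h2 : lagL (n+2) α x
      = (∑ k ∈ Finset.range (n+1), dcoef α (n+2) k * (-x)^k / (Nat.factorial k : ℝ))
        + (α + (n:ℝ) + 2) * ((-x)^(n+1) / (Nat.factorial (n+1) : ℝ))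
        + (-x)^(n+2) / (Nat.factorial (n+2) : ℝ) := by
    rw [lagL_eq, Finset.sum_range_succ, Finset.sum_range_succ]
    have e1 : dcoef α (n+2) (n+2) = 1 := by simp [dcoef_pp, pp]
    have e2 : dcoef α (n+2) (n+1) = α + (n:ℝ) + 2 := by
      rw [dcoef_pp, show n+2-(n+1) = 1 from by omega]
      simp [pp, Finset.prod_range_one]
      push_cast; ring
    rw [e1, e2]; ring
  have hgg : ∀ k : ℕ, gaux α x n (k+1)
      = ((k:ℝ)+1) * dcoef α (n+1) k * (-x)^(k+1) / (Nat.factorial (k+1) : ℝ) := by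
    intro k
    simp [gaux]
  have hx : x * lagL (n+1) α x
      = -((∑ k ∈ Finset.range (n+1), gaux α x n k)
          + gaux α x n (n+1) + gaux α x n (n+2)) := by
    have hterm : ∀ k ∈ Finset.range (n+2),
        x * (dcoef α (n+1) k * (-x)^k / (Nat.factorial k : ℝ)) = -(gaux α x n (k+1)) := by
      intro k _
      rw [hgg k, Nat.factorial_succ]
      have hk : (Nat.factorial k : ℝ) ≠ 0 := Nat.cast_ne_zero.mpr (Nat.factorial_ne_zero k)
      have hk1 : ((k:ℝ)+1) ≠ 0 := by positivity
      push_cast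
      field_simp
      ring
    rw [lagL_eq, Finset.mul_sum, Finset.sum_congr rfl hterm]
    have hshift := Finset.sum_range_succ' (gaux α x n) (n+2)
    have hg0 : gaux α x n 0 = 0 := by simp [gaux]
    rw [Finset.sum_range_succ, Finset.sum_range_succ, hg0] at hshift
    rw [Finset.sum_neg_distrib]
    linarith [hshift]
  have hkey : ∀ k ∈ Finset.range (n+1),
      ((n:ℝ)+2) * (dcoef α (n+2) k * (-x)^k / (Nat.factorial k : ℝ))
        = (2*(n:ℝ)+3+α) * (dcoef α (n+1) k * (-x)^k / (Nat.factorial k : ℝ))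
          + gaux α x n k
          - ((n:ℝ)+1+α) * (dcoef α n k * (-x)^k / (Nat.factorial k : ℝ)) := by
    intro k hk
    have hkn : k ≤ n := by
      have := Finset.mem_range.mp hk; omega
    obtain ⟨m, rfl⟩ := le_iff_exists_add.mp hkn
    have hid := main_id α k m
    rw [gaux]
    push_cast
    linear_combination hid * ((-x)^k / (Nat.factorial k : ℝ))
  have hsum : ((n:ℝ)+2) * (∑ k ∈ Finset.range (n+1), dcoef α (n+2) k * (-x)^k / (Nat.factorial k : ℝ))
      = (2*(n:ℝ)+3+α) * (∑ k ∈ Finset.range (n+1), dcoef α (n+1) k * (-x)^k / (Nat.factorial k : ℝ))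
        + (∑ k ∈ Finset.range (n+1), gaux α x n k)
        - ((n:ℝ)+1+α) * (∑ k ∈ Finset.range (n+1), dcoef α n k * (-x)^k / (Nat.factorial k : ℝ)) := by
    rw [Finset.mul_sum, Finset.sum_congr rfl hkey, Finset.sum_sub_distrib,
        Finset.sum_add_distrib, ← Finset.mul_sum, ← Finset.mul_sum]
  have hgn1 : gaux α x n (n+1) = ((n:ℝ)+1) * (α+(n:ℝ)+1) * ((-x)^(n+1) / (Nat.factorial (n+1) : ℝ)) := by
    rw [hgg n]
    have : dcoef α (n+1) n = α + (n:ℝ) + 1 := by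
      rw [dcoef_pp, show n+1-n = 1 from by omega]
      simp [pp, Finset.prod_range_one]
    rw [this]; ring
  have hgn2 : gaux α x n (n+2) = ((n:ℝ)+2) * ((-x)^(n+2) / (Nat.factorial (n+2) : ℝ)) := by
    rw [hgg (n+1)]
    have : dcoef α (n+1) (n+1) = 1 := by simp [dcoef_pp, pp]
    rw [this]; push_cast; ring
  rw [hgn1, hgn2] at hx
  linear_combination ((n:ℝ)+2) * h2 - (2*(n:ℝ)+3+α) * h1 + ((n:ℝ)+1+α) * h0 + hx + hsum

noncomputable def Gfun (α x : ℝ) (k : ℕ) : ℝ :=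
  (-1)^k * (Nat.factorial k : ℝ) * lagL k α x

lemma G_rec (α x : ℝ) (n : ℕ) :
    Gfun α x (n+2)
      = (x - (2*(n:ℝ)+3+α)) * Gfun α x (n+1) - ((n:ℝ)+1)*((n:ℝ)+1+α) * Gfun α x n := by
  have h := lagL_rec α x n
  unfold Gfun
  simp only [Nat.factorial_succ]
  push_cast
  linear_combination ((-1:ℝ)^n * ((n:ℝ)+1) * (Nat.factorial n : ℝ)) * h

lemma lagL_zero (α x : ℝ) : lagL 0 α x = 1 := by
  simp [lagL]

lemma lagL_one (α x : ℝ) : lagL 1 α x = α + 1 - x := by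
  simp [lagL, Finset.sum_range_succ]
  ring

/-- Szegő's bound: every zero `x` of `L_n^{(α)}` with `α > -1` satisfies
`x < 2n + α + 1 + √((2n+α+1)² + 1/4 - α²)`; in particular the largest zero does. -/
theorem laguerre_largest_zero_bound (n : ℕ) (α : ℝ) (hα : -1 < α)
    (x : ℝ) (hzero : lagL n α x = 0) :
    x < 2 * (n : ℝ) + α + 1
        + Real.sqrt ((2 * (n : ℝ) + α + 1) ^ 2 + 1 / 4 - α ^ 2) := by
  by_contra hcon
  push_neg at hcon
  rcases Nat.eq_zero_or_pos n with hn0 | hn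
  · subst hn0
    rw [lagL_zero] at hzero
    norm_num at hzero
  · set T := Real.sqrt ((2 * (n : ℝ) + α + 1) ^ 2 + 1 / 4 - α ^ 2) with hT
    have hT0 : 0 ≤ T := Real.sqrt_nonneg _
    have hT2 : (2*(n:ℝ)+α+1)^2 + 1/4 - α^2 ≤ T^2 := by
      rcases le_or_gt 0 ((2*(n:ℝ)+α+1)^2 + 1/4 - α^2) with h | h
      · rw [hT, Real.sq_sqrt h]
      · nlinarith [sq_nonneg T]
    set t := 1 + T/2 with hdt
    have ht : 0 < t := by rw [hdt]; linarith
    have hnR : (1:ℝ) ≤ (n:ℝ) := by exact_mod_cast hn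
    have hxB : 2*(n:ℝ)+α+1 + T ≤ x := hcon
    have key : ∀ k : ℕ, k + 1 ≤ n → 0 < Gfun α x k ∧ t * Gfun α x k ≤ Gfun α x (k+1) := by
      intro k
      induction k with
      | zero =>
        intro _
        have hG0 : Gfun α x 0 = 1 := by simp [Gfun, lagL_zero]
        have hG1 : Gfun α x 1 = x - (α+1) := by
          unfold Gfun
          rw [lagL_one]
          push_cast [Nat.factorial]
          ring
        refine ⟨by rw [hG0]; norm_num, ?_⟩
        rw [hG0, hG1, hdt]
        linarith
      | succ k ih =>
        intro h2
        have h1 : k + 1 ≤ n := by omega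
        obtain ⟨hGk, hstep⟩ := ih h1
        have hGk1 : 0 < Gfun α x (k+1) := lt_of_lt_of_le (mul_pos ht hGk) hstep
        refine ⟨hGk1, ?_⟩
        have hrec := G_rec α x k
        have hkn : (k:ℝ) + 2 ≤ (n:ℝ) := by exact_mod_cast h2
        have hk0 : (0:ℝ) ≤ (k:ℝ) := Nat.cast_nonneg k
        have hc0 : 0 ≤ ((k:ℝ)+1)*((k:ℝ)+1+α) := by nlinarith
        have hble : ((k:ℝ)+1)*((k:ℝ)+1+α) ≤ t*t := by
          have e1 : ((k:ℝ)+1)*((k:ℝ)+1+α) ≤ ((n:ℝ)-1)*((n:ℝ)-1+α) := by nlinarith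
          have e2 : 4*(((n:ℝ)-1)*((n:ℝ)-1+α)) ≤ 4*(t*t) := by
            rw [hdt]
            nlinarith [hT2, hT0]
          linarith
        have hax : 2*t ≤ x - (2*(k:ℝ)+3+α) := by
          rw [hdt]; linarith
        -- from t*Gk ≤ G(k+1): c*(t*Gk) ≤ c*G(k+1)
        have e2 : ((k:ℝ)+1)*((k:ℝ)+1+α) * (t * Gfun α x k)
            ≤ ((k:ℝ)+1)*((k:ℝ)+1+α) * Gfun α x (k+1) :=
          mul_le_mul_of_nonneg_left hstep hc0
        have e3 : t*(2*t) ≤ t*(x - (2*(k:ℝ)+3+α)) :=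
          mul_le_mul_of_nonneg_left hax ht.le
        have e4 : (t*(2*t)) * Gfun α x (k+1) ≤ (t*(x - (2*(k:ℝ)+3+α))) * Gfun α x (k+1) :=
          mul_le_mul_of_nonneg_right e3 hGk1.le
        have e5 : ((k:ℝ)+1)*((k:ℝ)+1+α) * Gfun α x (k+1) ≤ (t*t) * Gfun α x (k+1) :=
          mul_le_mul_of_nonneg_right hble hGk1.le
        have er : t * Gfun α x (k+2)
            = (t*(x - (2*(k:ℝ)+3+α))) * Gfun α x (k+1)
              - ((k:ℝ)+1)*((k:ℝ)+1+α) * (t * Gfun α x k) := by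
          rw [hrec]; ring
        have e4' : (t*(2*t)) * Gfun α x (k+1) = t*t*Gfun α x (k+1) + t*t*Gfun α x (k+1) := by
          ring
        have a1 : ((k:ℝ)+1)*((k:ℝ)+1+α) * (t*Gfun α x k) ≤ (t*t) * Gfun α x (k+1) :=
          le_trans e2 e5
        have efin : t*(t*Gfun α x (k+1)) ≤ t * Gfun α x (k+2) := by
          rw [er]
          linarith [e4, e4', a1]
        show t * Gfun α x (k+1) ≤ Gfun α x (k+2)
        exact le_of_mul_le_mul_left efin ht
    obtain ⟨hpos, hlast⟩ := key (n-1) (by omega)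
    have hn1 : n - 1 + 1 = n := by omega
    rw [hn1] at hlast
    have hGn : 0 < Gfun α x n := lt_of_lt_of_le (mul_pos ht hpos) hlast
    have hGz : Gfun α x n = 0 := by simp [Gfun, hzero]
    rw [hGz] at hGn
    exact lt_irrefl 0 hGn
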